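/- Let b > 0 and s be real numbers such that θ := π(1−s)/b satisfies θ/π ∉ ℤ, and let m_e, m_o be arbitrary real numbers. Then the symmetric partial sums ∑_{j=-N}^{N} [ m_e/(1 − s + 2bj) + m_o/(1 − s + (2j+1)b) ] converge as N → ∞, and their limit equals (π/(2b))·[(m_e + m_o)·cot θ + (m_e − m_o)·csc θ]. -/

import Mathlib

open Real Filter Topology
open Complex

/-- Auxiliary function whose Fourier series on `AddCircle (2π)` yields the cotangent
partial-fraction expansion. -/
noncomputable def auxCos (y : ℝ) : ℝ → ℂ := fun x => Complex.cos (y*(x-π))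

lemma intexp_aux (c : ℂ) (hc : c ≠ 0) :
    ∫ x in (0:ℝ)..(2*π), Complex.exp (c*x) = (Complex.exp (2*π*c) - 1)/c := by
  rw [integral_exp_mul_complex hc]
  push_cast
  rw [mul_zero, Complex.exp_zero]
  ring

lemma sin_pi_mul_ne_aux (y : ℝ) (hy : ∀ k : ℤ, y ≠ (k:ℝ)) : Real.sin (π*y) ≠ 0 := by
  rw [Real.sin_ne_zero_iff]
  intro n hn
  exact hy n (mul_left_cancel₀ Real.pi_ne_zero (by linarith [hn]))

lemma coeff_eq_aux (y : ℝ) (hy : ∀ k : ℤ, y ≠ (k:ℝ)) (n : ℤ) :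
    haveI : Fact (0 < 2*π) := ⟨by positivity⟩
    fourierCoeff (AddCircle.liftIco (2*π) 0 (auxCos y)) n =
      ((Real.sin (π*y)/(2*π) * (1/(y - n) + 1/(y + n)) : ℝ) : ℂ) := by
  haveI : Fact (0 < 2*π) := ⟨by positivity⟩
  have h1 : ((y : ℂ) - n) ≠ 0 := sub_ne_zero.2 (by exact_mod_cast hy n)
  have h2 : ((y : ℂ) + n) ≠ 0 := by
    have : y ≠ ((-n : ℤ):ℝ) := hy (-n)
    push_cast at this
    intro hc
    exact this (by exact_mod_cast eq_neg_of_add_eq_zero_left hc)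
  have hπ : (π:ℂ) ≠ 0 := by exact_mod_cast Real.pi_ne_zero
  have hc1 : ((y:ℂ) - n) * Complex.I ≠ 0 := mul_ne_zero h1 Complex.I_ne_zero
  have hc2 : (-((y:ℂ) + n)) * Complex.I ≠ 0 := mul_ne_zero (neg_ne_zero.2 h2) Complex.I_ne_zero
  rw [fourierCoeff_liftIco_eq, fourierCoeffOn_eq_integral]
  simp only [fourier_coe_apply, smul_eq_mul, zero_add, sub_zero]
  have key : ∀ x : ℝ, cexp (2 * ↑π * Complex.I * ↑(-n) * ↑x / ↑(2*π)) * auxCos y x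
      = cexp (-((π:ℂ)*y)*Complex.I)/2 * cexp ((((y:ℂ) - n)*Complex.I)*x)
        + cexp (((π:ℂ)*y)*Complex.I)/2 * cexp (((-((y:ℂ) + n))*Complex.I)*x) := by
    intro x
    have hA : 2 * (π:ℂ) * Complex.I * ((-n : ℤ):ℂ) * (x:ℝ) / ((2*π : ℝ):ℂ) = -((n:ℂ)*Complex.I*x) := by
      push_cast; field_simp
    rw [hA, auxCos]
    rw [show Complex.cos ((y:ℂ)*((x:ℂ)-(π:ℂ))) =
        (cexp (((y:ℂ)*((x:ℂ)-(π:ℂ)))*Complex.I) + cexp (-((y:ℂ)*((x:ℂ)-(π:ℂ)))*Complex.I))/2 from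
      (eq_div_iff (two_ne_zero' ℂ)).mpr (by rw [mul_comm]; exact Complex.two_cos _)]
    rw [← mul_div_assoc, mul_add, ← Complex.exp_add, ← Complex.exp_add, add_div,
        div_mul_eq_mul_div, div_mul_eq_mul_div, ← Complex.exp_add, ← Complex.exp_add]
    congr 3 <;> ring
  rw [intervalIntegral.integral_congr (g := fun x : ℝ =>
      cexp (-((π:ℂ)*y)*Complex.I)/2 * cexp ((((y:ℂ) - n)*Complex.I)*x)
        + cexp (((π:ℂ)*y)*Complex.I)/2 * cexp (((-((y:ℂ) + n))*Complex.I)*x)) (fun x _ => key x)]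
  have int1 : IntervalIntegrable (fun x : ℝ => cexp (-((π:ℂ)*y)*Complex.I)/2 * cexp ((((y:ℂ) - n)*Complex.I)*x)) MeasureTheory.volume 0 (2*π) := by
    apply Continuous.intervalIntegrable; fun_prop
  have int2 : IntervalIntegrable (fun x : ℝ => cexp (((π:ℂ)*y)*Complex.I)/2 * cexp (((-((y:ℂ) + n))*Complex.I)*x)) MeasureTheory.volume 0 (2*π) := by
    apply Continuous.intervalIntegrable; fun_prop
  rw [intervalIntegral.integral_add int1 int2, intervalIntegral.integral_const_mul,
    intervalIntegral.integral_const_mul, intexp_aux _ hc1, intexp_aux _ hc2]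
  have hE1 : cexp (2*(π:ℂ)*((((y:ℂ) - n))*Complex.I)) =
      cexp (((π:ℂ)*y)*Complex.I) * cexp (((π:ℂ)*y)*Complex.I) := by
    have hper : cexp (((-n:ℤ):ℂ) * (2*(π:ℂ)*Complex.I)) = 1 := Complex.exp_int_mul_two_pi_mul_I (-n)
    calc cexp (2*(π:ℂ)*((((y:ℂ) - n))*Complex.I))
        = cexp (((π:ℂ)*y)*Complex.I) * cexp (((π:ℂ)*y)*Complex.I) * cexp (((-n:ℤ):ℂ) * (2*(π:ℂ)*Complex.I)) := by
          rw [← Complex.exp_add, ← Complex.exp_add]; congr 1; push_cast; ring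
      _ = _ := by rw [hper, mul_one]
  have hE2 : cexp (2*(π:ℂ)*((-(((y:ℂ) + n)))*Complex.I)) =
      cexp (-((π:ℂ)*y)*Complex.I) * cexp (-((π:ℂ)*y)*Complex.I) := by
    have hper : cexp (((-n:ℤ):ℂ) * (2*(π:ℂ)*Complex.I)) = 1 := Complex.exp_int_mul_two_pi_mul_I (-n)
    calc cexp (2*(π:ℂ)*((-(((y:ℂ) + n)))*Complex.I))
        = cexp (-((π:ℂ)*y)*Complex.I) * cexp (-((π:ℂ)*y)*Complex.I) * cexp (((-n:ℤ):ℂ) * (2*(π:ℂ)*Complex.I)) := by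
          rw [← Complex.exp_add, ← Complex.exp_add]; congr 1; push_cast; ring
      _ = _ := by rw [hper, mul_one]
  rw [hE1, hE2]
  set a := cexp (((π:ℂ)*y)*Complex.I) with ha_def
  set bb := cexp (-((π:ℂ)*y)*Complex.I) with hbb_def
  have hab : a * bb = 1 := by
    rw [ha_def, hbb_def, ← Complex.exp_add, show ((π:ℂ)*y)*Complex.I + -((π:ℂ)*y)*Complex.I = 0 by ring,
      Complex.exp_zero]
  have hs : a - bb = 2*Complex.I*((Real.sin (π*y) : ℝ):ℂ) := by
    rw [ha_def, hbb_def, Complex.ofReal_sin, Complex.sin]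
    push_cast
    rw [show (-(↑π * ↑y):ℂ) * Complex.I = -(↑π * ↑y * Complex.I) by ring]
    ring_nf
    rw [Complex.I_sq]
    ring
  have key1 : bb * (a*a - 1) = 2*Complex.I*((Real.sin (π*y) : ℝ):ℂ) := by
    linear_combination a*hab + hs
  have key2 : a * (bb*bb - 1) = -(2*Complex.I*((Real.sin (π*y) : ℝ):ℂ)) := by
    linear_combination bb*hab - hs
  rw [Complex.real_smul]
  calc ((1/(2*π):ℝ):ℂ) * (bb/2 * ((a*a - 1)/(((y:ℂ)-n)*Complex.I)) + a/2 * ((bb*bb - 1)/((-((y:ℂ)+n))*Complex.I)))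
      = (1/(2*(π:ℂ))) * ((bb*(a*a-1)) / (2*(((y:ℂ)-n)*Complex.I)) + (a*(bb*bb-1)) / (2*((-((y:ℂ)+n))*Complex.I))) := by
        push_cast; field_simp
    _ = (1/(2*(π:ℂ))) * ((2*Complex.I*((Real.sin (π*y) : ℝ):ℂ)) / (2*(((y:ℂ)-n)*Complex.I))
          + (-(2*Complex.I*((Real.sin (π*y) : ℝ):ℂ))) / (2*((-((y:ℂ)+n))*Complex.I))) := by
        rw [key1, key2]
    _ = ((1/(2*(π:ℂ)))) * (((Real.sin (π*y):ℝ):ℂ)/((y:ℂ)-n) + ((Real.sin (π*y):ℝ):ℂ)/((y:ℂ)+n)) := by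
        rw [show (2*Complex.I*((Real.sin (π*y) : ℝ):ℂ)) / (2*(((y:ℂ)-n)*Complex.I))
            = ((Real.sin (π*y):ℝ):ℂ)/((y:ℂ)-n) from by
          rw [div_eq_div_iff (by exact mul_ne_zero (two_ne_zero' ℂ) hc1) h1]; ring]
        rw [show (-(2*Complex.I*((Real.sin (π*y) : ℝ):ℂ))) / (2*((-((y:ℂ)+n))*Complex.I))
            = ((Real.sin (π*y):ℝ):ℂ)/((y:ℂ)+n) from by
          rw [div_eq_div_iff (by exact mul_ne_zero (two_ne_zero' ℂ) hc2) h2]; ring]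
    _ = ((Real.sin (π*y)/(2*π) * (1/(y - n) + 1/(y + n)) : ℝ) : ℂ) := by
        push_cast
        rw [mul_add, mul_add]
        congr 1 <;> · field_simp

lemma summable_aux (y : ℝ) :
    Summable (fun n : ℤ => 1/(y-(n:ℝ)) + 1/(y+(n:ℝ))) := by
  have hev : ∀ᶠ n : ℤ in cofinite, 2*|y|+1 ≤ |(n:ℝ)| := by
    rw [Filter.eventually_cofinite]
    apply Set.Finite.subset (Set.finite_Icc (-(⌈2*|y|+1⌉) : ℤ) ⌈2*|y|+1⌉)
    intro n hn
    simp only [Set.mem_setOf_eq, not_le] at hn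
    have h2 : |(n:ℝ)| ≤ (⌈2*|y|+1⌉ : ℤ) := le_trans hn.le (Int.le_ceil _)
    have := abs_le.1 h2
    rw [Set.mem_Icc]
    exact ⟨by exact_mod_cast this.1, by exact_mod_cast this.2⟩
  apply Summable.of_norm_bounded_eventually (g := fun n : ℤ => (4*|y|+2) * (1/(n:ℝ)^2))
  · exact ((Real.summable_one_div_int_pow.mpr one_lt_two).mul_left _)
  · filter_upwards [hev] with n hn
    have hy0 : |y| < |(n:ℝ)| := by nlinarith [abs_nonneg y]
    have hn0 : (n:ℝ) ≠ 0 := by intro h0; rw [h0] at hy0; simp at hy0; nlinarith [abs_nonneg y]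
    have h1 : y - n ≠ 0 := by
      intro h0; have : y = (n:ℝ) := by linarith [sub_eq_zero.1 h0]
      rw [this] at hy0; simp at hy0
    have h2 : y + n ≠ 0 := by
      intro h0; have : y = -(n:ℝ) := by linarith
      rw [this] at hy0; simp at hy0
    have hnn : (0:ℝ) < (n:ℝ)^2 := by positivity
    have hyy : y^2 ≤ (n:ℝ)^2/2 - 1/2 := by
      nlinarith [_root_.sq_abs y, _root_.sq_abs (n:ℝ), abs_nonneg y]
    rw [div_add_div _ _ h1 h2]
    have : (y-n)*(y+n) = y^2 - (n:ℝ)^2 := by ring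
    rw [this]
    rw [show (1*(y+(n:ℝ)) + (y-(n:ℝ))*1) = 2*y by ring]
    rw [Real.norm_eq_abs, abs_div, mul_one_div]
    rw [abs_of_nonpos (by nlinarith : y^2 - (n:ℝ)^2 ≤ 0)]
    rw [div_le_div_iff₀ (by nlinarith) hnn]
    have h2y : |2*y| = 2*|y| := by rw [abs_mul]; norm_num
    rw [h2y]
    nlinarith [abs_nonneg y]

lemma hasSum_cot_aux (y : ℝ) (hy : ∀ k : ℤ, y ≠ (k:ℝ)) :
    HasSum (fun n : ℤ => 1/(y-(n:ℝ)) + 1/(y+(n:ℝ))) (2*π*(Real.cos (π*y)/Real.sin (π*y))) := by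
  haveI : Fact (0 < 2*π) := ⟨by positivity⟩
  have hsin := sin_pi_mul_ne_aux y hy
  have hcont : Continuous (AddCircle.liftIco (2*π) 0 (auxCos y)) := by
    apply AddCircle.liftIco_zero_continuous
    · show Complex.cos _ = Complex.cos _
      rw [show ((0:ℝ):ℂ) - (π:ℂ) = -((((2*π:ℝ)):ℂ) - π) by push_cast; ring]
      rw [mul_neg, Complex.cos_neg]
    · unfold auxCos; fun_prop
  set f : C(AddCircle (2*π), ℂ) := ⟨AddCircle.liftIco (2*π) 0 (auxCos y), hcont⟩ with hf
  have hcoeff : ∀ n : ℤ, fourierCoeff (⇑f) n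
      = ((Real.sin (π*y)/(2*π) * (1/(y - n) + 1/(y + n)) : ℝ) : ℂ) := fun n => coeff_eq_aux y hy n
  have hsummable : Summable (fourierCoeff (⇑f)) := by
    rw [funext hcoeff]
    exact ((((summable_aux y).mul_left (Real.sin (π*y)/(2*π)))).hasSum.mapL Complex.ofRealCLM).summable
  have H := has_pointwise_sum_fourier_series_of_summable hsummable (0 : AddCircle (2*π))
  have hf0 : f (0 : AddCircle (2*π)) = ((Real.cos (π*y) : ℝ) : ℂ) := by
    show AddCircle.liftIco (2*π) 0 (auxCos y) ((0:ℝ) : AddCircle (2*π)) = _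
    rw [AddCircle.liftIco_zero_coe_apply (by constructor <;> [exact le_refl 0; positivity])]
    show Complex.cos _ = _
    rw [show ((y:ℝ):ℂ) * (((0:ℝ):ℂ) - (π:ℂ)) = -(((π*y : ℝ):ℂ)) by push_cast; ring]
    rw [Complex.cos_neg, Complex.ofReal_cos]
  simp only [fourier_eval_zero, smul_eq_mul, mul_one, hf0] at H
  rw [funext hcoeff] at H
  have H2 := H.mapL Complex.reCLM
  simp only [Complex.reCLM_apply, Complex.ofReal_re] at H2
  have H3 := H2.mul_left (2*π/Real.sin (π*y))
  have he : (fun n : ℤ => (2*π/Real.sin (π*y)) * (Real.sin (π*y)/(2*π) * (1/(y - n) + 1/(y + n))))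
      = (fun n : ℤ => 1/(y-(n:ℝ)) + 1/(y+(n:ℝ))) := by
    funext n
    field_simp
  rw [he] at H3
  convert H3 using 1
  · rfl
  · ring

lemma tendsto_cot_aux (y : ℝ) (hy : ∀ k : ℤ, y ≠ (k:ℝ)) :
    Tendsto (fun N : ℕ => ∑ j ∈ Finset.Icc (-(N:ℤ)) (N:ℤ), 1/(y+(j:ℝ))) atTop
      (𝓝 (π * (Real.cos (π*y)/Real.sin (π*y)))) := by
  have H := hasSum_cot_aux y hy
  have ht : Tendsto (fun N : ℕ => Finset.Icc (-(N:ℤ)) (N:ℤ)) atTop atTop := by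
    apply Filter.tendsto_atTop_finset_of_monotone
    · intro m n hmn
      apply Finset.Icc_subset_Icc <;> omega
    · intro x
      refine ⟨x.natAbs, ?_⟩
      simp only [Finset.mem_Icc]
      omega
  have H4 : Tendsto (fun N : ℕ => ∑ j ∈ Finset.Icc (-(N:ℤ)) (N:ℤ), (1/(y-(j:ℝ)) + 1/(y+(j:ℝ))))
      atTop (𝓝 (2*π*(Real.cos (π*y)/Real.sin (π*y)))) := H.comp ht
  have hsym : ∀ N : ℕ, ∑ j ∈ Finset.Icc (-(N:ℤ)) (N:ℤ), (1/(y-(j:ℝ)) + 1/(y+(j:ℝ)))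
      = 2 * ∑ j ∈ Finset.Icc (-(N:ℤ)) (N:ℤ), 1/(y+(j:ℝ)) := by
    intro N
    rw [Finset.sum_add_distrib, two_mul]
    congr 1
    apply Finset.sum_nbij' (fun j => -j) (fun j => -j) <;>
        intros <;> simp_all only [Finset.mem_Icc, neg_neg] <;> try omega
    push_cast
    ring_nf
  simp only [hsym] at H4
  have := H4.const_mul (1/2 : ℝ)
  simp only [← mul_assoc] at this
  convert this using 2 with N
  · ring
  · ring

/-- Let `b > 0`, `s` real, `θ := π(1-s)/b` with `θ/π` not an integer, and `m_e, m_o` real.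
Then `∑_{j=-N}^{N} [m_e/(1-s+2bj) + m_o/(1-s+(2j+1)b)]` converges as `N → ∞` to
`(π/(2b)) * ((m_e+m_o) cot θ + (m_e-m_o) csc θ)`. -/
theorem stmt_2 (b s : ℝ) (hb : 0 < b) (θ : ℝ) (hθ : θ = π * (1 - s) / b)
    (h : ∀ k : ℤ, θ / π ≠ (k : ℝ)) (me mo : ℝ) :
    Tendsto (fun N : ℕ => ∑ j ∈ Finset.Icc (-(N : ℤ)) (N : ℤ),
        (me / (1 - s + 2 * b * (j : ℝ)) + mo / (1 - s + (2 * (j : ℝ) + 1) * b)))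
      atTop
      (𝓝 ((π / (2 * b)) *
        ((me + mo) * (Real.cos θ / Real.sin θ) + (me - mo) * (1 / Real.sin θ)))) := by
  have hb0 : b ≠ 0 := ne_of_gt hb
  obtain ⟨x, hx⟩ : ∃ x : ℝ, x = (1 - s) / b := ⟨_, rfl⟩
  have hθx : θ = π * x := by rw [hθ, hx]; ring
  have hxk : ∀ k : ℤ, x ≠ (k:ℝ) := by
    intro k hk
    exact h k (by rw [hθx, hk]; field_simp)
  have hy1 : ∀ k : ℤ, x/2 ≠ (k:ℝ) := by
    intro k hk
    exact hxk (2*k) (by push_cast; linarith)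
  have hy2 : ∀ k : ℤ, (x+1)/2 ≠ (k:ℝ) := by
    intro k hk
    exact hxk (2*k-1) (by push_cast; linarith)
  have T1 := (tendsto_cot_aux (x/2) hy1).const_mul (me/(2*b))
  have T2 := (tendsto_cot_aux ((x+1)/2) hy2).const_mul (mo/(2*b))
  have T := T1.add T2
  have hfun : ∀ N : ℕ, (me/(2*b)) * (∑ j ∈ Finset.Icc (-(N:ℤ)) (N:ℤ), 1/(x/2+(j:ℝ)))
        + (mo/(2*b)) * (∑ j ∈ Finset.Icc (-(N:ℤ)) (N:ℤ), 1/((x+1)/2+(j:ℝ)))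
      = ∑ j ∈ Finset.Icc (-(N:ℤ)) (N:ℤ),
        (me / (1 - s + 2 * b * (j : ℝ)) + mo / (1 - s + (2 * (j : ℝ) + 1) * b)) := by
    intro N
    rw [Finset.mul_sum, Finset.mul_sum, ← Finset.sum_add_distrib]
    apply Finset.sum_congr rfl
    intro j _
    rw [mul_one_div, mul_one_div, div_div, div_div]
    rw [show 2*b*(x/2+(j:ℝ)) = 1 - s + 2*b*(j:ℝ) by rw [hx]; field_simp]
    rw [show 2*b*((x+1)/2+(j:ℝ)) = 1 - s + (2*(j:ℝ)+1)*b by rw [hx]; field_simp; ring]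
  have hs' : Real.sin (θ/2) ≠ 0 := by
    have := sin_pi_mul_ne_aux (x/2) hy1
    rwa [show π*(x/2) = θ/2 by rw [hθx]; ring] at this
  have hc' : Real.cos (θ/2) ≠ 0 := by
    have := sin_pi_mul_ne_aux ((x+1)/2) hy2
    rw [show π*((x+1)/2) = θ/2 + π/2 by rw [hθx]; ring, Real.sin_add_pi_div_two] at this
    exact this
  have hval : (me/(2*b)) * (π * (Real.cos (π*(x/2))/Real.sin (π*(x/2))))
        + (mo/(2*b)) * (π * (Real.cos (π*((x+1)/2))/Real.sin (π*((x+1)/2))))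
      = (π / (2 * b)) * ((me + mo) * (Real.cos θ / Real.sin θ) + (me - mo) * (1 / Real.sin θ)) := by
    rw [show π*(x/2) = θ/2 by rw [hθx]; ring,
        show π*((x+1)/2) = θ/2 + π/2 by rw [hθx]; ring,
        Real.sin_add_pi_div_two, Real.cos_add_pi_div_two,
        show θ = 2*(θ/2) by ring, Real.sin_two_mul, Real.cos_two_mul]
    have h2 : 2*Real.cos (θ/2)^2 - 1 = Real.cos (θ/2)^2 - Real.sin (θ/2)^2 := by
      have := Real.sin_sq_add_cos_sq (θ/2)
      linarith
    rw [h2]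
    field_simp
    linear_combination (me-mo) * Real.sin_sq_add_cos_sq (θ/2)
  rw [funext hfun, hval] at T
  exact T
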